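/- Let M be a real symmetric negative definite n×n matrix with M_{ij} ≥ 0 for all i ≠ j, and suppose the graph on {1,…,n} with an edge between i and j whenever M_{ij} > 0 is connected. Then every entry of the inverse matrix M⁻¹ is strictly negative. -/

import Mathlib

theorem inverse_entries_neg (n : ℕ) (M : Matrix (Fin n) (Fin n) ℝ)
    (hsymm : M.IsSymm) (hnegdef : (-M).PosDef)
    (hoffdiag : ∀ i j, i ≠ j → 0 ≤ M i j)
    (hconn : ∀ i j : Fin n,
      Relation.ReflTransGen (fun a b => a ≠ b ∧ 0 < M a b) i j) :
    ∀ i j, M⁻¹ i j < 0 := by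
  intro i j
  set A : Matrix (Fin n) (Fin n) ℝ := -M with hA
  have hAunit : IsUnit A.det := Matrix.isUnit_iff_isUnit_det _ |>.1 hnegdef.isUnit
  have hMinv : M⁻¹ = -A⁻¹ := by
    apply Matrix.inv_eq_right_inv
    have : A * A⁻¹ = 1 := Matrix.mul_nonsing_inv A hAunit
    calc M * -A⁻¹ = (-M) * A⁻¹ := by rw [Matrix.mul_neg, Matrix.neg_mul]
    _ = 1 := this
  -- x = column j of A⁻¹
  set x : Fin n → ℝ := fun k => A⁻¹ k j with hxdef
  have hmul : ∀ k, A.mulVec x k = (Pi.single j 1 : Fin n → ℝ) k := by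
    intro k
    have h1 : (A * A⁻¹) k j = (1 : Matrix (Fin n) (Fin n) ℝ) k j := by
      rw [Matrix.mul_nonsing_inv A hAunit]
    simp only [Matrix.mul_apply, Matrix.one_apply] at h1
    simp only [Matrix.mulVec, dotProduct, hxdef, h1, Pi.single_apply]
  have hAoff : ∀ a b, a ≠ b → A a b ≤ 0 := by
    intro a b hab
    simp only [hA, Matrix.neg_apply, neg_nonpos]
    exact hoffdiag a b hab
  -- Step 1: x ≥ 0
  have hxnn : ∀ k, 0 ≤ x k := by
    by_contra hcon
    push_neg at hcon
    set q : Fin n → ℝ := fun k => max (-x k) 0 with hq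
    have hq0 : q ≠ 0 := by
      obtain ⟨k, hk⟩ := hcon
      intro h
      have := congrFun h k
      simp only [hq, Pi.zero_apply, max_eq_right_iff] at this
      linarith
    have hqnn : ∀ k, 0 ≤ q k := fun k => le_max_right _ _
    have hpos := (Matrix.posDef_iff_dotProduct_mulVec.1 hnegdef).2 hq0
    simp only [star_trivial] at hpos
    -- compute q ⬝ᵥ A.mulVec q ≤ 0
    have key : dotProduct q (A.mulVec q) ≤ 0 := by
      have hxq : ∀ k, x k + q k = max (x k) 0 := by
        intro k
        rcases le_total (x k) 0 with h | h
        · simp [hq, max_eq_right h, max_eq_left (neg_nonneg.2 h)]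
        · simp [hq, max_eq_left h, max_eq_right (neg_nonpos.2 h)]
      set p : Fin n → ℝ := fun k => max (x k) 0 with hp
      have hpnn : ∀ k, 0 ≤ p k := fun k => le_max_right _ _
      have hqp : ∀ k, q k = p k - x k := fun k => by
        have h1 := hxq k
        show q k = (x k ⊔ 0) - x k
        linarith
      have hmv : A.mulVec q = fun k => A.mulVec p k - (Pi.single j 1 : Fin n → ℝ) k := by
        funext k
        have : q = fun k => p k - x k := funext hqp
        rw [this]
        have : (fun k => p k - x k) = p - x := rfl
        rw [this, Matrix.mulVec_sub]
        simp [hmul k]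
      rw [hmv]
      have hsplit : dotProduct q (fun k => A.mulVec p k - (Pi.single j 1 : Fin n → ℝ) k)
          = dotProduct q (A.mulVec p) - q j := by
        simp only [dotProduct, mul_sub, Finset.sum_sub_distrib]
        congr 1
        rw [Finset.sum_eq_single j]
        · simp
        · intro b _ hb; simp [Pi.single_apply, hb]
        · simp
      rw [hsplit]
      have h1 : dotProduct q (A.mulVec p) ≤ 0 := by
        simp only [dotProduct, Matrix.mulVec]
        apply Finset.sum_nonpos
        intro a _
        rw [Finset.mul_sum]
        apply Finset.sum_nonpos
        intro b _
        rcases eq_or_ne a b with rfl | hab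
        · -- diagonal: q a * (A a a * p a) ; q a * p a = 0
          rcases le_total (x a) 0 with h | h
          · have : p a = 0 := max_eq_right h
            simp [this]
          · have : q a = 0 := max_eq_right (neg_nonpos.2 h)
            simp [this]
        · have h1 := hAoff a b hab
          exact mul_nonpos_of_nonneg_of_nonpos (hqnn a)
            (mul_nonpos_of_nonpos_of_nonneg h1 (hpnn b))
      linarith [hqnn j]
    linarith
  -- zero propagation
  have hprop : ∀ a, x a = 0 → a ≠ j ∧ ∀ b, 0 < M a b → x b = 0 := by
    intro a ha
    have heq := hmul a
    simp only [Matrix.mulVec, dotProduct] at heq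
    have hterm : ∀ b ∈ Finset.univ, A a b * x b ≤ 0 := by
      intro b _
      rcases eq_or_ne a b with rfl | hab
      · simp [ha]
      · exact mul_nonpos_of_nonpos_of_nonneg (hAoff a b hab) (hxnn b)
    have hsum : ∑ b, A a b * x b ≤ 0 := Finset.sum_nonpos hterm
    have haj : a ≠ j := by
      intro h
      subst h
      rw [heq] at hsum
      simp at hsum
      linarith
    refine ⟨haj, ?_⟩
    have hzero : ∑ b, A a b * x b = 0 := by
      rw [heq]; simp [Pi.single_apply, haj]
    intro b hb
    have heach := (Finset.sum_eq_zero_iff_of_nonpos hterm).1 hzero b (Finset.mem_univ b)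
    have hdiag : 0 < A b b := by
      have hne : (Pi.single b 1 : Fin n → ℝ) ≠ 0 := by
        intro hc
        have := congrFun hc b
        simp at this
      have := (Matrix.posDef_iff_dotProduct_mulVec.1 hnegdef).2 hne
      simp only [star_trivial] at this
      simpa [dotProduct, Matrix.mulVec, Pi.single_apply, mul_ite, ite_mul,
        mul_one, mul_zero, zero_mul, one_mul, Finset.sum_ite_eq, Finset.sum_ite_eq'] using this
    have hab : a ≠ b := by
      intro h; subst h
      have : A a a ≤ 0 := by
        simp only [hA, Matrix.neg_apply, neg_nonpos]
        exact hb.le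
      linarith
    have hAab : A a b < 0 := by simp only [hA, Matrix.neg_apply, neg_neg, neg_lt_zero]; exact hb
    have := mul_eq_zero.1 heach
    rcases this with h | h
    · exact absurd h hAab.ne
    · exact h
  -- strict positivity of x
  have hxpos : ∀ k, 0 < x k := by
    intro k
    rcases lt_or_eq_of_le (hxnn k) with h | h
    · exact h
    · exfalso
      have hzero : ∀ b, Relation.ReflTransGen (fun a c => a ≠ c ∧ 0 < M a c) k b → x b = 0 := by
        intro b hrt
        induction hrt with
        | refl => exact h.symm
        | tail _ hbc ih => exact (hprop _ ih).2 _ hbc.2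
      exact (hprop j (hzero j (hconn k j))).1 rfl
  have := hxpos i
  rw [hMinv]
  simp only [Matrix.neg_apply, neg_neg, neg_lt_zero]
  exact this
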